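/- Let v₀ > 0, a ∈ [0, v₀), let m : ℝ → ℝ be continuously differentiable with m′(s) ≤ 1/16 for all s ∈ (a, v₀), and let r : (a, v₀] → ℝ be differentiable with r(s) > 0 and r′(s) = 1/2 − m(s)/r(s) for all s ∈ (a, v₀]. If r(v₀) ≤ 4·m(v₀), then r(s) ≤ 4·m(s) for all s ∈ (a, v₀]. -/

import Mathlib

open Set Filter Topology

/-- Upper barrier comparison for the outgoing radial null geodesic ODE
`r′(s) = 1/2 − m(s)/r(s)` in the Vaidya spacetime: if `m` is `C¹` with `m′ ≤ 1/16` on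
`(a, v₀)`, `r > 0` solves the ODE on `(a, v₀]`, and `r(v₀) ≤ 4·m(v₀)`, then
`r(s) ≤ 4·m(s)` on `(a, v₀]`. -/
theorem vaidya_upper_barrier (v₀ a : ℝ) (hv₀ : 0 < v₀) (ha : 0 ≤ a) (hav : a < v₀)
    (m : ℝ → ℝ) (hm : ContDiff ℝ 1 m)
    (hm' : ∀ s ∈ Set.Ioo a v₀, deriv m s ≤ 1 / 16)
    (r : ℝ → ℝ)
    (hpos : ∀ s ∈ Set.Ioc a v₀, 0 < r s)
    (hode : ∀ s ∈ Set.Ioc a v₀,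
      HasDerivWithinAt r (1 / 2 - m s / r s) (Set.Ioc a v₀) s)
    (hinit : r v₀ ≤ 4 * m v₀) :
    ∀ s ∈ Set.Ioc a v₀, r s ≤ 4 * m s := by
  set f : ℝ → ℝ := fun x => r x - 4 * m x with hf
  have hrc : ContinuousOn r (Set.Ioc a v₀) := fun s hs => (hode s hs).continuousWithinAt
  have hfc : ContinuousOn f (Set.Ioc a v₀) :=
    hrc.sub (continuousOn_const.mul hm.continuous.continuousOn)
  intro s₀ hs₀
  by_contra hcon
  push_neg at hcon
  have hfs₀ : 0 < f s₀ := by simp [hf]; linarith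
  -- the set where f ≤ 0 on [s₀, v₀]
  set S : Set ℝ := {u ∈ Set.Icc s₀ v₀ | f u ≤ 0} with hS
  have hsub : Set.Icc s₀ v₀ ⊆ Set.Ioc a v₀ := fun x hx => ⟨lt_of_lt_of_le hs₀.1 hx.1, hx.2⟩
  have hSne : S.Nonempty := ⟨v₀, ⟨hs₀.2, le_refl _⟩, by simp [hf]; linarith⟩
  have hSclosed : IsClosed S := by
    have : S = Set.Icc s₀ v₀ ∩ f ⁻¹' Set.Iic 0 := by
      ext x; simp [hS, Set.mem_sep_iff, and_comm]
    rw [this]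
    exact (hfc.mono hsub).preimage_isClosed_of_isClosed isClosed_Icc isClosed_Iic
  have hSbdd : BddBelow S := ⟨s₀, fun x hx => hx.1.1⟩
  set t := sInf S with ht
  have htS : t ∈ S := hSclosed.csInf_mem hSne hSbdd
  have hts₀ : s₀ < t := by
    rcases lt_or_eq_of_le htS.1.1 with h | h
    · exact h
    · exfalso; have := htS.2; rw [← h] at this; linarith
  have hIccsub : Set.Icc s₀ t ⊆ Set.Ioc a v₀ := fun x hx =>
    ⟨lt_of_lt_of_le hs₀.1 hx.1, le_trans hx.2 htS.1.2⟩
  -- f > 0 on [s₀, t)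
  have hfpos : ∀ u ∈ Set.Ico s₀ t, 0 < f u := by
    intro u hu
    by_contra h
    push_neg at h
    have : u ∈ S := ⟨⟨hu.1, le_trans hu.2.le htS.1.2⟩, h⟩
    exact absurd (csInf_le hSbdd this) (not_le.2 hu.2)
  -- strict monotonicity of f on [s₀, t]
  have hmono : StrictMonoOn f (Set.Icc s₀ t) := by
    apply StrictMonoOn.mono (s := Set.Icc s₀ t) ?_ (le_refl _)
    apply strictMonoOn_of_deriv_pos (convex_Icc s₀ t) (hfc.mono hIccsub)
    intro x hx
    rw [interior_Icc] at hx
    have hxmem : x ∈ Set.Ioc a v₀ := hIccsub ⟨hx.1.le, hx.2.le⟩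
    have hxoo : x ∈ Set.Ioo a v₀ := ⟨hxmem.1, lt_of_lt_of_le hx.2 htS.1.2⟩
    have hrx : 0 < r x := hpos x hxmem
    have hfx : 0 < f x := hfpos x ⟨hx.1.le, hx.2⟩
    have hrder : HasDerivAt r (1 / 2 - m x / r x) x :=
      (hode x hxmem).hasDerivAt (mem_of_superset (isOpen_Ioo.mem_nhds hxoo) Set.Ioo_subset_Ioc_self)
    have hmder : HasDerivAt m (deriv m x) x := ((hm.differentiable one_ne_zero) x).hasDerivAt
    have hfder : HasDerivAt f (1 / 2 - m x / r x - 4 * deriv m x) x :=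
      hrder.sub (hmder.const_mul 4)
    rw [hfder.deriv]
    have hmx : m x / r x < 1 / 4 := by
      rw [div_lt_iff₀ hrx]
      have : 4 * m x < r x := by simp [hf] at hfx; linarith
      linarith
    have := hm' x hxoo
    linarith
  have : f s₀ < f t :=
    hmono (Set.left_mem_Icc.2 hts₀.le) (Set.right_mem_Icc.2 hts₀.le) hts₀
  have := htS.2
  linarith
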